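/- There exists exactly one family (t_{s,j})_{1≤s≤d, 1≤j≤n} of nonnegative reals that is a solution of the system (dist)–(ne2); that is, a solution exists and any two solutions coincide. -/

import Mathlib

/-- Probability of at least `m` successes in `l-1` Bernoulli(x) trials. -/
noncomputable def w (l m : ℕ) (x : ℝ) : ℝ :=
  ∑ i ∈ Finset.Icc m (l - 1), ((l - 1).choose i : ℝ) * x ^ i * (1 - x) ^ (l - 1 - i)

/-- `W x = 1 - w x`. -/
noncomputable def W (l m : ℕ) (x : ℝ) : ℝ := 1 - w l m x

/-- `γ_{s,j} = ∑_{k=j}^n t_{s,k} q_k`. -/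
noncomputable def gam (n : ℕ) (q : ℕ → ℝ) (t : ℕ → ℕ → ℝ) (s j : ℕ) : ℝ :=
  ∑ k ∈ Finset.Icc j n, t s k * q k

/-- `(t_{s,j})` is a solution of the system (dist)–(ne2). -/
def IsSolution (l m d n : ℕ) (M q : ℕ → ℝ) (t : ℕ → ℕ → ℝ) : Prop :=
  (∀ s ∈ Finset.Icc 1 d, ∀ j ∈ Finset.Icc 1 n, 0 ≤ t s j) ∧
  ∀ j ∈ Finset.Icc 1 n,
    (∑ s ∈ Finset.Icc 1 d, t s j) = 1 ∧
    ∃ dj ∈ Finset.Icc 1 d,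
      (∀ s ∈ Finset.Icc 1 d, s ≤ dj → 0 < t s j) ∧
      (∀ s ∈ Finset.Icc 1 d, dj < s → t s j = 0) ∧
      (∀ s ∈ Finset.Icc 1 dj,
        M s * W l m (gam n q t s j) = M 1 * W l m (gam n q t 1 j)) ∧
      (∀ s, dj ≤ s → s < d →
        M (s + 1) * W l m (gam n q t (s + 1) j) ≤ M s * W l m (gam n q t s j))

open Finset

section wfacts
variable (l m : ℕ)

lemma w_zero (hm : 1 ≤ m) : w l m 0 = 0 := by
  unfold w
  apply Finset.sum_eq_zero
  intro i hi
  have : 1 ≤ i := le_trans hm (mem_Icc.mp hi).1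
  rw [zero_pow (by omega)]
  ring

lemma w_one (hml : m ≤ l - 1) : w l m 1 = 1 := by
  unfold w
  rw [Finset.sum_eq_single (l - 1)]
  · simp
  · intro i hi hne
    have h2 := (mem_Icc.mp hi).2
    rw [sub_self, zero_pow (by omega)]
    ring
  · intro h
    exact absurd (mem_Icc.mpr ⟨hml, le_refl _⟩) h

lemma hasDerivAt_w (hm : 1 ≤ m) (hml : m ≤ l - 1) (x : ℝ) :
    HasDerivAt (w l m)
      (((l - 1).choose m : ℝ) * m * x ^ (m - 1) * (1 - x) ^ (l - 1 - m)) x := by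
  set N := l - 1 with hN
  set A : ℕ → ℝ := fun i => (N.choose i : ℝ) * i * x ^ (i - 1) * (1 - x) ^ (N - i) with hA
  have key : ∀ i ∈ Icc m N, HasDerivAt (fun y => (N.choose i : ℝ) * y ^ i * (1 - y) ^ (N - i))
      (A i - A (i + 1)) x := by
    intro i hi
    obtain ⟨h1i, hiN⟩ := mem_Icc.mp hi
    have h1 : HasDerivAt (fun y : ℝ => y ^ i) (i * x ^ (i - 1)) x := hasDerivAt_pow i x
    have h2 : HasDerivAt (fun y : ℝ => (1 - y) ^ (N - i))
        (((N - i : ℕ) : ℝ) * (1 - x) ^ (N - i - 1) * (-1)) x := by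
      exact (hasDerivAt_pow (N - i) (1 - x)).comp x ((hasDerivAt_id x).const_sub 1)
    have h3 := (h1.mul h2).const_mul ((N.choose i : ℝ))
    convert h3 using 1
    · rfl
    · rfl
    · funext y; simp only [Pi.mul_apply]; ring
    have hcast : ((N.choose (i+1) : ℝ)) * ((i:ℝ)+1) = (N.choose i : ℝ) * ((N:ℝ) - (i:ℝ)) := by
      have h := Nat.choose_succ_right_eq N i
      have : ((N.choose (i+1) * (i+1) : ℕ) : ℝ) = ((N.choose i * (N - i) : ℕ) : ℝ) := by
        exact_mod_cast h
      push_cast [Nat.cast_sub hiN] at this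
      linarith [this]
    have hsub : N - (i+1) = N - i - 1 := by omega
    have hNi : ((N - i : ℕ) : ℝ) = (N:ℝ) - (i:ℝ) := Nat.cast_sub hiN
    have hi1 : (i + 1) - 1 = i := rfl
    simp only [hA, hsub, hi1, hNi]
    push_cast
    linear_combination (-(x ^ i * (1 - x) ^ (N - i - 1))) * hcast
  have hsum := HasDerivAt.fun_sum key
  have htel : ∑ i ∈ Icc m N, (A i - A (i + 1)) = A m := by
    rw [show Icc m N = Ico m (N+1) by rw [Finset.Ico_add_one_right_eq_Icc], Finset.sum_Ico_eq_sum_range]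
    have : ∀ i, A (m + i) - A (m + i + 1) = (fun k => A (m + k)) i - (fun k => A (m + k)) (i+1) := by
      intro i; simp [Nat.add_assoc]
    simp_rw [this]
    rw [Finset.sum_range_sub' (fun k => A (m + k))]
    have hend : m + (N + 1 - m) = N + 1 := by omega
    rw [hend]
    have : A (N + 1) = 0 := by
      simp [hA, Nat.choose_eq_zero_of_lt (Nat.lt_succ_self N)]
    rw [this, sub_zero]; norm_num
  rw [htel] at hsum
  have hw : w l m = fun y => ∑ i ∈ Icc m N, ((N.choose i : ℝ)) * y ^ i * (1 - y) ^ (N - i) := rfl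
  rw [hw]
  exact hsum

end wfacts

section wfacts2
variable (l m : ℕ)

lemma continuous_w : Continuous (w l m) := by
  unfold w
  apply continuous_finset_sum
  intro i _
  exact (continuous_const.mul (continuous_pow i)).mul
    ((continuous_const.sub continuous_id).pow _)

lemma continuous_W : Continuous (W l m) := continuous_const.sub (continuous_w l m)

lemma w_strictMono (hm : 1 ≤ m) (hml : m ≤ l - 1) :
    StrictMonoOn (w l m) (Set.Icc 0 1) := by
  apply strictMonoOn_of_deriv_pos (convex_Icc 0 1) (continuous_w l m).continuousOn
  intro x hx
  rw [interior_Icc] at hx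
  rw [(hasDerivAt_w l m hm hml x).deriv]
  have h1 : (0:ℝ) < ((l-1).choose m : ℝ) := by
    exact_mod_cast Nat.choose_pos hml
  have h2 : (0:ℝ) < (m:ℝ) := by exact_mod_cast hm
  have h3 : (0:ℝ) < x ^ (m-1) := pow_pos hx.1 _
  have h4 : (0:ℝ) < (1-x) ^ (l-1-m) := pow_pos (by linarith [hx.2]) _
  positivity

lemma W_strictAnti (hm : 1 ≤ m) (hml : m ≤ l - 1) :
    StrictAntiOn (W l m) (Set.Icc 0 1) := by
  intro x hx y hy hxy
  unfold W
  have := w_strictMono l m hm hml hx hy hxy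
  linarith

lemma W_zero (hm : 1 ≤ m) : W l m 0 = 1 := by unfold W; rw [w_zero l m hm]; ring

lemma W_one (hml : m ≤ l - 1) : W l m 1 = 0 := by unfold W; rw [w_one l m hml]; ring

lemma W_pos (hm : 1 ≤ m) (hml : m ≤ l - 1) {x : ℝ} (hx0 : 0 ≤ x) (hx1 : x < 1) :
    0 < W l m x := by
  have := W_strictAnti l m hm hml (Set.mem_Icc.mpr ⟨hx0, le_of_lt hx1⟩)
    (Set.mem_Icc.mpr ⟨by norm_num, le_refl 1⟩) hx1
  rw [W_one l m hml] at this
  linarith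

lemma W_le_one (hm : 1 ≤ m) (hml : m ≤ l - 1) {x : ℝ} (hx0 : 0 ≤ x) (hx1 : x ≤ 1) :
    W l m x ≤ 1 := by
  rcases eq_or_lt_of_le hx0 with h | h
  · rw [← h, W_zero l m hm]
  · have := W_strictAnti l m hm hml (Set.mem_Icc.mpr ⟨le_refl 0, by norm_num⟩)
      (Set.mem_Icc.mpr ⟨hx0, hx1⟩) h
    rw [W_zero l m hm] at this
    linarith

lemma W_anti (hm : 1 ≤ m) (hml : m ≤ l - 1) {x y : ℝ} (hx0 : 0 ≤ x) (hxy : x ≤ y)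
    (hy1 : y ≤ 1) : W l m y ≤ W l m x := by
  rcases eq_or_lt_of_le hxy with h | h
  · rw [h]
  · exact le_of_lt (W_strictAnti l m hm hml (Set.mem_Icc.mpr ⟨hx0, le_trans hxy hy1⟩)
      (Set.mem_Icc.mpr ⟨le_trans hx0 hxy, hy1⟩) h)

end wfacts2

noncomputable def G (l m : ℕ) (x : ℝ) : ℝ := ∫ u in (0:ℝ)..x, W l m u

section Gfacts
variable (l m : ℕ)

lemma G_continuous : Continuous (G l m) :=
  intervalIntegral.continuous_primitive
    (fun a b => (continuous_W l m).intervalIntegrable a b) 0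

lemma G_sub (x y : ℝ) : G l m y - G l m x = ∫ u in x..y, W l m u := by
  unfold G
  rw [sub_eq_iff_eq_add]
  rw [← intervalIntegral.integral_add_adjacent_intervals
    ((continuous_W l m).intervalIntegrable 0 x) ((continuous_W l m).intervalIntegrable x y)]
  ring

lemma G_diff_le (hm : 1 ≤ m) (hml : m ≤ l - 1) {x y : ℝ} (hx : 0 ≤ x) (hxy : x ≤ y)
    (hy : y ≤ 1) : G l m y - G l m x ≤ (y - x) * W l m x := by
  rw [G_sub]
  have : ∫ u in x..y, W l m u ≤ ∫ u in x..y, W l m x := by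
    apply intervalIntegral.integral_mono_on hxy ((continuous_W l m).intervalIntegrable x y)
      (intervalIntegrable_const)
    intro u hu
    exact W_anti l m hm hml hx hu.1 (le_trans hu.2 hy)
  simpa using this

lemma le_G_diff (hm : 1 ≤ m) (hml : m ≤ l - 1) {x y : ℝ} (hx : 0 ≤ x) (hxy : x ≤ y)
    (hy : y ≤ 1) : (y - x) * W l m y ≤ G l m y - G l m x := by
  rw [G_sub]
  have : ∫ u in x..y, W l m y ≤ ∫ u in x..y, W l m u := by
    apply intervalIntegral.integral_mono_on hxy (intervalIntegrable_const)
      ((continuous_W l m).intervalIntegrable x y)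
    intro u hu
    exact W_anti l m hm hml (le_trans hx hu.1) hu.2 hy
  simpa using this

end Gfacts

/-- Column condition: distribution `t` over rows `1..d` with water-filling structure. -/
def ColCond (l m d : ℕ) (M b : ℕ → ℝ) (q : ℝ) (t : ℕ → ℝ) : Prop :=
  (∀ s ∈ Finset.Icc 1 d, 0 ≤ t s) ∧ (∑ s ∈ Finset.Icc 1 d, t s) = 1 ∧
  ∃ dj ∈ Finset.Icc 1 d,
    (∀ s ∈ Finset.Icc 1 d, s ≤ dj → 0 < t s) ∧
    (∀ s ∈ Finset.Icc 1 d, dj < s → t s = 0) ∧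
    (∀ s ∈ Finset.Icc 1 dj, M s * W l m (b s + t s * q) = M 1 * W l m (b 1 + t 1 * q)) ∧
    (∀ s, dj ≤ s → s < d → M (s+1) * W l m (b (s+1) + t (s+1) * q) ≤ M s * W l m (b s + t s * q))

lemma chain_le (V : ℕ → ℝ) (dj d : ℕ) (hch : ∀ s, dj ≤ s → s < d → V (s+1) ≤ V s) :
    ∀ r, dj ≤ r → r ≤ d → V r ≤ V dj := by
  intro r
  induction r with
  | zero =>
    intro h1 _
    have : dj = 0 := by omega
    rw [this]
  | succ k ih =>
    intro h1 h2
    rcases Nat.lt_or_ge dj (k+1) with h | h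
    · have hk : dj ≤ k := by omega
      exact le_trans (hch k hk (by omega)) (ih hk (by omega))
    · have : dj = k + 1 := by omega
      rw [this]

lemma single_le_one {d : ℕ} {t : ℕ → ℝ} (ht0 : ∀ s ∈ Finset.Icc 1 d, 0 ≤ t s)
    (hsum : (∑ s ∈ Finset.Icc 1 d, t s) = 1) {s : ℕ} (hs : s ∈ Finset.Icc 1 d) : t s ≤ 1 := by
  rw [← hsum]
  exact Finset.single_le_sum ht0 hs

/-- The level bound: every row's value is at most the common level. -/
lemma level_bound (l m d : ℕ) (M b : ℕ → ℝ) (q : ℝ) (t : ℕ → ℝ)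
    (h : ColCond l m d M b q t) :
    ∀ s ∈ Finset.Icc 1 d, M s * W l m (b s + t s * q) ≤ M 1 * W l m (b 1 + t 1 * q) := by
  obtain ⟨ht0, hsum, dj, hdj, hpos, hzero, heq, hch⟩ := h
  intro s hs
  obtain ⟨hs1, hsd⟩ := Finset.mem_Icc.mp hs
  obtain ⟨hdj1, hdjd⟩ := Finset.mem_Icc.mp hdj
  rcases le_or_gt s dj with h | h
  · exact le_of_eq (heq s (Finset.mem_Icc.mpr ⟨hs1, h⟩))
  · have := chain_le (fun s => M s * W l m (b s + t s * q)) dj d hch s (le_of_lt h) hsd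
    have hdjeq := heq dj (Finset.mem_Icc.mpr ⟨hdj1, le_refl _⟩)
    linarith

lemma gamma_mem (l m d : ℕ) (b : ℕ → ℝ) (q : ℝ) (hq : 0 < q)
    (hb0 : ∀ s ∈ Finset.Icc 1 d, 0 ≤ b s) (hb1 : ∀ s ∈ Finset.Icc 1 d, b s + q < 1)
    {t : ℕ → ℝ} (ht0 : ∀ s ∈ Finset.Icc 1 d, 0 ≤ t s)
    (hsum : (∑ s ∈ Finset.Icc 1 d, t s) = 1) {s : ℕ} (hs : s ∈ Finset.Icc 1 d) :
    0 ≤ b s + t s * q ∧ b s + t s * q < 1 := by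
  constructor
  · have := ht0 s hs
    have := hb0 s hs
    nlinarith
  · have h1 := single_le_one ht0 hsum hs
    have := hb1 s hs
    nlinarith

/-- One-sided comparison: if the level of `t` is at most that of `t'`,
then `t'`-gammas are pointwise at most `t`-gammas. -/
lemma col_le (l m d : ℕ) (hm : 1 ≤ m) (hml : m ≤ l - 1) (M b : ℕ → ℝ)
    (hMpos : ∀ s ∈ Finset.Icc 1 d, 0 < M s)
    (q : ℝ) (hq : 0 < q)
    (hb0 : ∀ s ∈ Finset.Icc 1 d, 0 ≤ b s) (hb1 : ∀ s ∈ Finset.Icc 1 d, b s + q < 1)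
    (t t' : ℕ → ℝ) (h : ColCond l m d M b q t) (h' : ColCond l m d M b q t')
    (hlev : M 1 * W l m (b 1 + t 1 * q) ≤ M 1 * W l m (b 1 + t' 1 * q)) :
    ∀ s ∈ Finset.Icc 1 d, b s + t' s * q ≤ b s + t s * q := by
  intro s hs
  have hlb := level_bound l m d M b q t h s hs
  obtain ⟨ht0, hsum, _⟩ := h
  obtain ⟨ht0', hsum', dj', hdj', hpos', hzero', heq', hch'⟩ := h'
  rcases le_or_gt (t' s) 0 with hts | hts
  · have : t' s = 0 := le_antisymm hts (ht0' s hs)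
    rw [this]
    have := ht0 s hs
    nlinarith
  · -- t' s > 0, so s ≤ dj' and level equality holds for t'
    have hsdj' : s ≤ dj' := by
      by_contra hcon
      exact absurd (hzero' s hs (by omega)) (by linarith)
    have heqs := heq' s (Finset.mem_Icc.mpr ⟨(Finset.mem_Icc.mp hs).1, hsdj'⟩)
    -- M s * W (γ s) ≤ λ ≤ λ' = M s * W (γ' s)
    have hW : W l m (b s + t s * q) ≤ W l m (b s + t' s * q) := by
      have hMs := hMpos s hs
      have : M s * W l m (b s + t s * q) ≤ M s * W l m (b s + t' s * q) := by
        rw [heqs]; linarith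
      exact le_of_mul_le_mul_left this hMs
    have hg := gamma_mem l m d b q hq hb0 hb1 ht0 hsum hs
    have hg' := gamma_mem l m d b q hq hb0 hb1 ht0' hsum' hs
    by_contra hcon
    push_neg at hcon
    have := W_strictAnti l m hm hml (Set.mem_Icc.mpr ⟨hg.1, le_of_lt hg.2⟩)
      (Set.mem_Icc.mpr ⟨hg'.1, le_of_lt hg'.2⟩) hcon
    linarith

lemma colUnique (l m d : ℕ) (hm : 1 ≤ m) (hml : m ≤ l - 1) (M b : ℕ → ℝ)
    (hMpos : ∀ s ∈ Finset.Icc 1 d, 0 < M s)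
    (q : ℝ) (hq : 0 < q)
    (hb0 : ∀ s ∈ Finset.Icc 1 d, 0 ≤ b s) (hb1 : ∀ s ∈ Finset.Icc 1 d, b s + q < 1)
    (t t' : ℕ → ℝ) (h : ColCond l m d M b q t) (h' : ColCond l m d M b q t') :
    ∀ s ∈ Finset.Icc 1 d, t s = t' s := by
  have main : ∀ u u' : ℕ → ℝ, ColCond l m d M b q u → ColCond l m d M b q u' →
      M 1 * W l m (b 1 + u 1 * q) ≤ M 1 * W l m (b 1 + u' 1 * q) →
      ∀ s ∈ Finset.Icc 1 d, u s = u' s := by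
    intro u u' hu hu' hlev s hs
    have hle := col_le l m d hm hml M b hMpos q hq hb0 hb1 u u' hu hu' hlev
    have hsums : ∑ s ∈ Finset.Icc 1 d, (b s + u' s * q) = ∑ s ∈ Finset.Icc 1 d, (b s + u s * q) := by
      rw [Finset.sum_add_distrib, Finset.sum_add_distrib, ← Finset.sum_mul, ← Finset.sum_mul,
        hu.2.1, hu'.2.1]
    have := (Finset.sum_eq_sum_iff_of_le hle).mp hsums s hs
    have : u' s * q = u s * q := by linarith
    have := mul_right_cancel₀ (ne_of_gt hq) this
    linarith
  rcases le_total (M 1 * W l m (b 1 + t 1 * q)) (M 1 * W l m (b 1 + t' 1 * q)) with hl | hl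
  · exact main t t' h h' hl
  · intro s hs
    exact (main t' t h' h hl s hs).symm

/-- From the chain at `dj`, monotonicity along rows of the value function. -/
lemma colMono (l m d : ℕ) (M b : ℕ → ℝ) (q : ℝ) (t : ℕ → ℝ)
    (h : ColCond l m d M b q t) :
    ∀ s ∈ Finset.Icc 1 d, ∀ r ∈ Finset.Icc 1 d, s ≤ r →
      M r * W l m (b r + t r * q) ≤ M s * W l m (b s + t s * q) := by
  obtain ⟨ht0, hsum, dj, hdj, hpos, hzero, heq, hch⟩ := h
  intro s hs r hr hsr
  rcases le_or_gt s dj with hsdj | hsdj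
  · have h1 := level_bound l m d M b q t ⟨ht0, hsum, dj, hdj, hpos, hzero, heq, hch⟩ r hr
    have h2 := heq s (Finset.mem_Icc.mpr ⟨(Finset.mem_Icc.mp hs).1, hsdj⟩)
    linarith
  · have hch' : ∀ u, s ≤ u → u < d → (fun v => M v * W l m (b v + t v * q)) (u+1) ≤
        (fun v => M v * W l m (b v + t v * q)) u :=
      fun u hu hud => hch u (le_trans (le_of_lt hsdj) hu) hud
    exact chain_le (fun v => M v * W l m (b v + t v * q)) s d hch' r hsr (Finset.mem_Icc.mp hr).2

section Exist

variable (l m d : ℕ) (M b : ℕ → ℝ) (q : ℝ)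

/-- The simplex. -/
def Simp (d : ℕ) : Set (ℕ → ℝ) :=
  {t | (∀ s, 0 ≤ t s ∧ t s ≤ 1) ∧ (∀ s, s ∉ Finset.Icc 1 d → t s = 0) ∧
    (∑ s ∈ Finset.Icc 1 d, t s) = 1}

/-- The objective. -/
noncomputable def Phi (l m d : ℕ) (M b : ℕ → ℝ) (q : ℝ) (t : ℕ → ℝ) : ℝ :=
  ∑ s ∈ Finset.Icc 1 d, M s * G l m (b s + t s * q)

lemma simp_compact : IsCompact (Simp d) := by
  have hK : IsCompact (Set.pi Set.univ (fun _ : ℕ => Set.Icc (0:ℝ) 1)) :=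
    isCompact_univ_pi (fun _ => isCompact_Icc)
  have hsub : Simp d ⊆ Set.pi Set.univ (fun _ : ℕ => Set.Icc (0:ℝ) 1) := by
    intro t ht s _
    exact Set.mem_Icc.mpr (ht.1 s)
  have hclosed : IsClosed (Simp d) := by
    have heq : Simp d = (⋂ (s : ℕ), {t : ℕ → ℝ | 0 ≤ t s ∧ t s ≤ 1}) ∩
        ((⋂ (s : ℕ) (_ : s ∉ Finset.Icc 1 d), {t : ℕ → ℝ | t s = 0}) ∩
        {t : ℕ → ℝ | (∑ s ∈ Finset.Icc 1 d, t s) = 1}) := by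
      ext t
      simp only [Simp, Set.mem_setOf_eq, Set.mem_inter_iff, Set.mem_iInter]
      try tauto
    rw [heq]
    refine IsClosed.inter ?_ (IsClosed.inter ?_ ?_)
    · refine isClosed_iInter (fun s => ?_)
      exact IsClosed.inter (isClosed_le continuous_const (continuous_apply s))
        (isClosed_le (continuous_apply s) continuous_const)
    · exact isClosed_iInter (fun s => isClosed_iInter (fun _ =>
        isClosed_eq (continuous_apply s) continuous_const))
    · exact isClosed_eq (continuous_finset_sum _ (fun s _ => continuous_apply s))
        continuous_const
  exact IsCompact.of_isClosed_subset hK hclosed hsub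

lemma simp_nonempty (hd : 1 ≤ d) : (Simp d).Nonempty := by
  refine ⟨fun s => if s = 1 then 1 else 0, ⟨?_, ?_, ?_⟩⟩
  · intro s
    by_cases h : s = 1 <;> simp [h]
  · intro s hs
    have : s ≠ 1 := by
      intro h
      exact hs (Finset.mem_Icc.mpr ⟨by omega, by omega⟩)
    simp [this]
  · rw [Finset.sum_ite_eq' (Finset.Icc 1 d) 1 (fun _ => (1:ℝ))]
    simp [Finset.mem_Icc.mpr ⟨le_refl 1, hd⟩]

lemma phi_continuous : Continuous (Phi l m d M b q) := by
  apply continuous_finset_sum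
  intro s _
  exact continuous_const.mul ((G_continuous l m).comp
    (continuous_const.add ((continuous_apply s).mul continuous_const)))

end Exist

section KKT
variable {l m d : ℕ} {M b : ℕ → ℝ} {q : ℝ}

lemma kkt (hm : 1 ≤ m) (hml : m ≤ l - 1) (hq : 0 < q)
    (hb0 : ∀ s ∈ Finset.Icc 1 d, 0 ≤ b s) (hb1 : ∀ s ∈ Finset.Icc 1 d, b s + q < 1)
    (hM0 : ∀ s ∈ Finset.Icc 1 d, 0 < M s)
    {t : ℕ → ℝ} (htS : t ∈ Simp d) (hmax : IsMaxOn (Phi l m d M b q) (Simp d) t)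
    {s r : ℕ} (hs : s ∈ Finset.Icc 1 d) (hr : r ∈ Finset.Icc 1 d) (hts : 0 < t s) :
    M r * W l m (b r + t r * q) ≤ M s * W l m (b s + t s * q) := by
  rcases eq_or_ne r s with rfl | hrs
  · exact le_refl _
  obtain ⟨hbox, hout, hsum⟩ := htS
  have hsr : s ≠ r := Ne.symm hrs
  have hpair : t r + t s ≤ 1 := by
    have h1 : t r + t s = ∑ u ∈ ({r, s} : Finset ℕ), t u := (Finset.sum_pair hrs).symm
    have h2 : (∑ u ∈ ({r, s} : Finset ℕ), t u) ≤ ∑ u ∈ Finset.Icc 1 d, t u := by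
      apply Finset.sum_le_sum_of_subset_of_nonneg
      · intro u hu
        rcases Finset.mem_insert.mp hu with rfl | hu
        · exact hr
        · rw [Finset.mem_singleton.mp hu]; exact hs
      · intro u _ _; exact (hbox u).1
    rw [hsum] at h2
    linarith [h1 ▸ h2]
  have key : ∀ ε : ℝ, 0 < ε → ε ≤ t s →
      M r * W l m ((b r + t r * q) + ε * q) ≤ M s * W l m ((b s + t s * q) - ε * q) := by
    intro ε hε hεs
    set t' : ℕ → ℝ := Function.update (Function.update t s (t s - ε)) r (t r + ε) with ht'def
    have ht'r : t' r = t r + ε := Function.update_self r _ _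
    have ht's : t' s = t s - ε := by
      rw [ht'def, Function.update_of_ne hsr, Function.update_self]
    have ht'other : ∀ u, u ≠ r → u ≠ s → t' u = t u := by
      intro u hur hus
      rw [ht'def, Function.update_of_ne hur, Function.update_of_ne hus]
    have hsmem : s ∈ (Finset.Icc 1 d).erase r := Finset.mem_erase.mpr ⟨hsr, hs⟩
    have hdecomp : ∀ f : ℕ → ℝ, ∑ u ∈ Finset.Icc 1 d, f u
        = f r + (f s + ∑ u ∈ ((Finset.Icc 1 d).erase r).erase s, f u) := by
      intro f
      rw [Finset.add_sum_erase _ f hsmem, Finset.add_sum_erase _ f hr]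
    have hrest : ∀ u ∈ ((Finset.Icc 1 d).erase r).erase s, t' u = t u := by
      intro u hu
      obtain ⟨hus, hu2⟩ := Finset.mem_erase.mp hu
      exact ht'other u (Finset.mem_erase.mp hu2).1 hus
    have ht'S : t' ∈ Simp d := by
      refine ⟨?_, ?_, ?_⟩
      · intro u
        rcases eq_or_ne u r with rfl | hur
        · rw [ht'r]; constructor <;> linarith [(hbox u).1, hpair]
        rcases eq_or_ne u s with rfl | hus
        · rw [ht's]; constructor <;> linarith [(hbox u).2]
        · rw [ht'other u hur hus]; exact hbox u
      · intro u hu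
        have hur : u ≠ r := fun h => hu (h ▸ hr)
        have hus : u ≠ s := fun h => hu (h ▸ hs)
        rw [ht'other u hur hus]; exact hout u hu
      · rw [hdecomp t', ht'r, ht's, Finset.sum_congr rfl hrest]
        have := hdecomp t
        linarith [hsum]
    have hΦ : Phi l m d M b q t' ≤ Phi l m d M b q t := hmax ht'S
    unfold Phi at hΦ
    rw [hdecomp (fun u => M u * G l m (b u + t' u * q)),
        hdecomp (fun u => M u * G l m (b u + t u * q))] at hΦ
    simp only [ht'r, ht's] at hΦ
    have hrest2 : ∑ u ∈ ((Finset.Icc 1 d).erase r).erase s, M u * G l m (b u + t' u * q)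
        = ∑ u ∈ ((Finset.Icc 1 d).erase r).erase s, M u * G l m (b u + t u * q) :=
      Finset.sum_congr rfl (fun u hu => by rw [hrest u hu])
    rw [hrest2] at hΦ
    have har : b r + (t r + ε) * q = (b r + t r * q) + ε * q := by ring
    have has : b s + (t s - ε) * q = (b s + t s * q) - ε * q := by ring
    rw [har, has] at hΦ
    -- bounds via G
    have hbr0 : 0 ≤ b r := hb0 r hr
    have hbs0 : 0 ≤ b s := hb0 s hs
    have htr0 : 0 ≤ t r := (hbox r).1
    have hy1 : (b r + t r * q) + ε * q ≤ 1 := by nlinarith [hb1 r hr]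
    have hys1 : b s + t s * q ≤ 1 := by nlinarith [hb1 s hs, (hbox s).2]
    have hWr : (ε * q) * W l m ((b r + t r * q) + ε * q)
        ≤ G l m ((b r + t r * q) + ε * q) - G l m (b r + t r * q) := by
      have := le_G_diff l m hm hml (x := b r + t r * q) (y := (b r + t r * q) + ε * q)
        (by positivity) (by nlinarith) hy1
      linarith [this]
    have hWs : G l m (b s + t s * q) - G l m ((b s + t s * q) - ε * q)
        ≤ (ε * q) * W l m ((b s + t s * q) - ε * q) := by
      have := G_diff_le l m hm hml (x := (b s + t s * q) - ε * q) (y := b s + t s * q)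
        (by nlinarith) (by nlinarith) hys1
      linarith [this]
    have hMr := hM0 r hr
    have hMs := hM0 s hs
    have h1 : M r * ((ε * q) * W l m ((b r + t r * q) + ε * q))
        ≤ M r * (G l m ((b r + t r * q) + ε * q) - G l m (b r + t r * q)) :=
      mul_le_mul_of_nonneg_left hWr (le_of_lt hMr)
    have h2 : M s * (G l m (b s + t s * q) - G l m ((b s + t s * q) - ε * q))
        ≤ M s * ((ε * q) * W l m ((b s + t s * q) - ε * q)) :=
      mul_le_mul_of_nonneg_left hWs (le_of_lt hMs)
    have h3 : (ε * q) * (M r * W l m ((b r + t r * q) + ε * q))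
        ≤ (ε * q) * (M s * W l m ((b s + t s * q) - ε * q)) := by nlinarith
    have hεq : 0 < ε * q := by positivity
    exact le_of_mul_le_mul_left h3 hεq
  -- take the limit ε → 0⁺
  have hcont : Continuous (fun ε : ℝ => M s * W l m ((b s + t s * q) - ε * q)
      - M r * W l m ((b r + t r * q) + ε * q)) := by
    apply Continuous.sub
    · exact continuous_const.mul ((continuous_W l m).comp
        (continuous_const.sub (continuous_id.mul continuous_const)))
    · exact continuous_const.mul ((continuous_W l m).comp
        (continuous_const.add (continuous_id.mul continuous_const)))
  have htend := (hcont.tendsto 0).mono_left (nhdsWithin_le_nhds (s := Set.Ioi (0:ℝ)))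
  have hev : ∀ᶠ ε in nhdsWithin (0:ℝ) (Set.Ioi 0), (0:ℝ) ≤ M s * W l m ((b s + t s * q) - ε * q)
      - M r * W l m ((b r + t r * q) + ε * q) := by
    filter_upwards [Ioc_mem_nhdsGT_of_mem (Set.mem_Ico.mpr ⟨le_refl (0:ℝ), hts⟩)] with ε hε
    linarith [key ε hε.1 hε.2]
  have := ge_of_tendsto htend hev
  simp only [zero_mul, sub_zero, add_zero] at this
  linarith

end KKT

lemma colExists (l m d : ℕ) (hm : 1 ≤ m) (hml : m ≤ l - 1) (hd : 1 ≤ d) (M b : ℕ → ℝ)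
    (q : ℝ) (hq : 0 < q)
    (hM0 : ∀ s ∈ Finset.Icc 1 d, 0 < M s)
    (hb0 : ∀ s ∈ Finset.Icc 1 d, 0 ≤ b s) (hb1 : ∀ s ∈ Finset.Icc 1 d, b s + q < 1)
    (hmono : ∀ s ∈ Finset.Icc 1 d, ∀ r ∈ Finset.Icc 1 d, s ≤ r →
      M r * W l m (b r) ≤ M s * W l m (b s)) :
    ∃ t : ℕ → ℝ, (∀ s, 0 ≤ t s) ∧ (∀ s, s ∉ Finset.Icc 1 d → t s = 0) ∧
      ColCond l m d M b q t := by
  obtain ⟨t, htS, hmax⟩ := (simp_compact d).exists_isMaxOn (simp_nonempty d hd)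
    (phi_continuous l m d M b q).continuousOn
  obtain ⟨hbox, hout, hsum⟩ := htS
  have htS' : t ∈ Simp d := ⟨hbox, hout, hsum⟩
  have hkkt : ∀ s ∈ Finset.Icc 1 d, ∀ r ∈ Finset.Icc 1 d, 0 < t s →
      M r * W l m (b r + t r * q) ≤ M s * W l m (b s + t s * q) :=
    fun s hs r hr hts => kkt hm hml hq hb0 hb1 hM0 htS' hmax hs hr hts
  -- the set of positive rows
  set P : Finset ℕ := (Finset.Icc 1 d).filter (fun s => 0 < t s) with hP
  have hPne : P.Nonempty := by
    by_contra hcon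
    rw [Finset.not_nonempty_iff_eq_empty] at hcon
    have : ∀ u ∈ Finset.Icc 1 d, t u = 0 := by
      intro u hu
      by_contra h
      have : 0 < t u := lt_of_le_of_ne (hbox u).1 (Ne.symm h)
      have : u ∈ P := Finset.mem_filter.mpr ⟨hu, this⟩
      rw [hcon] at this
      exact absurd this (Finset.notMem_empty u)
    rw [Finset.sum_eq_zero this] at hsum
    norm_num at hsum
  set dj := P.max' hPne with hdjdef
  have hdjP : dj ∈ P := P.max'_mem hPne
  have hdjIcc : dj ∈ Finset.Icc 1 d := (Finset.mem_filter.mp hdjP).1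
  have htdj : 0 < t dj := (Finset.mem_filter.mp hdjP).2
  have hzero : ∀ u ∈ Finset.Icc 1 d, dj < u → t u = 0 := by
    intro u hu hdju
    by_contra h
    have htu : 0 < t u := lt_of_le_of_ne (hbox u).1 (Ne.symm h)
    have : u ∈ P := Finset.mem_filter.mpr ⟨hu, htu⟩
    exact absurd (P.le_max' u this) (by omega)
  have hgmem : ∀ u ∈ Finset.Icc 1 d, 0 ≤ b u + t u * q ∧ b u + t u * q < 1 :=
    fun u hu => gamma_mem l m d b q hq hb0 hb1 (fun v hv => (hbox v).1) hsum hu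
  have hpos : ∀ u ∈ Finset.Icc 1 d, u ≤ dj → 0 < t u := by
    intro u hu hudj
    rcases eq_or_ne u dj with rfl | hne
    · exact htdj
    by_contra h
    have htu : t u = 0 := le_antisymm (le_of_not_gt h) (hbox u).1
    -- strict contradiction chain
    have h1 := hkkt dj hdjIcc u hu htdj  -- M u W(γ u) ≤ M dj W(γ dj)
    have h2 : M dj * W l m (b dj + t dj * q) < M dj * W l m (b dj) := by
      apply mul_lt_mul_of_pos_left _ (hM0 dj hdjIcc)
      apply W_strictAnti l m hm hml
      · exact Set.mem_Icc.mpr ⟨hb0 dj hdjIcc, by nlinarith [hb1 dj hdjIcc,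
          (hgmem dj hdjIcc).2]⟩
      · exact Set.mem_Icc.mpr ⟨(hgmem dj hdjIcc).1, le_of_lt (hgmem dj hdjIcc).2⟩
      · nlinarith
    have h3 := hmono u hu dj hdjIcc (by omega)  -- M dj W(b dj) ≤ M u W(b u)
    rw [htu] at h1
    simp only [zero_mul, add_zero] at h1
    linarith
  refine ⟨t, fun u => (hbox u).1, hout, fun u hu => (hbox u).1, hsum, dj, hdjIcc, hpos, hzero,
    ?_, ?_⟩
  · intro u hu
    obtain ⟨hu1, hudj⟩ := Finset.mem_Icc.mp hu
    have hd1 : (1:ℕ) ∈ Finset.Icc 1 d := Finset.mem_Icc.mpr ⟨le_refl 1, hd⟩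
    have huIcc : u ∈ Finset.Icc 1 d := Finset.mem_Icc.mpr
      ⟨hu1, le_trans hudj (Finset.mem_Icc.mp hdjIcc).2⟩
    have ht1 : 0 < t 1 := hpos 1 hd1 (Finset.mem_Icc.mp hdjIcc).1
    have htu : 0 < t u := hpos u huIcc hudj
    exact le_antisymm (hkkt 1 hd1 u huIcc ht1) (hkkt u huIcc 1 hd1 htu)
  · intro u hudj hud
    have huIcc : u ∈ Finset.Icc 1 d := Finset.mem_Icc.mpr
      ⟨le_trans (Finset.mem_Icc.mp hdjIcc).1 hudj, by omega⟩
    have hu1Icc : u + 1 ∈ Finset.Icc 1 d := Finset.mem_Icc.mpr ⟨by omega, by omega⟩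
    rcases eq_or_lt_of_le hudj with rfl | hlt
    · exact hkkt dj huIcc (dj+1) hu1Icc htdj
    · have hz1 : t (u+1) = 0 := hzero (u+1) hu1Icc (by omega)
      have hz2 : t u = 0 := hzero u huIcc hlt
      rw [hz1, hz2]
      simp only [zero_mul, add_zero]
      exact hmono u huIcc (u+1) hu1Icc (by omega)


section gamFacts

lemma gam_decomp (n : ℕ) (q : ℕ → ℝ) (t : ℕ → ℕ → ℝ) (s j : ℕ) (hj : j ≤ n) :
    gam n q t s j = t s j * q j + gam n q t s (j+1) := by
  unfold gam
  rw [← Finset.add_sum_erase _ _ (Finset.mem_Icc.mpr ⟨le_refl j, hj⟩),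
    Finset.Icc_erase_left, ← Finset.Icc_add_one_left_eq_Ioc]

lemma gam_congr (n : ℕ) (q : ℕ → ℝ) (t t' : ℕ → ℕ → ℝ) (s j : ℕ)
    (h : ∀ k, j ≤ k → k ≤ n → t s k = t' s k) : gam n q t s j = gam n q t' s j := by
  unfold gam
  exact Finset.sum_congr rfl (fun k hk => by
    rw [h k (Finset.mem_Icc.mp hk).1 (Finset.mem_Icc.mp hk).2])

lemma gam_nonneg (n : ℕ) (q : ℕ → ℝ) (t : ℕ → ℕ → ℝ) (s j : ℕ)
    (hq : ∀ k ∈ Finset.Icc 1 n, 0 < q k) (hj : 1 ≤ j)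
    (ht : ∀ k, j ≤ k → k ≤ n → 0 ≤ t s k) : 0 ≤ gam n q t s j := by
  apply Finset.sum_nonneg
  intro k hk
  obtain ⟨h1, h2⟩ := Finset.mem_Icc.mp hk
  exact mul_nonneg (ht k h1 h2) (le_of_lt (hq k (Finset.mem_Icc.mpr ⟨by omega, h2⟩)))

lemma gam_le (n : ℕ) (q : ℕ → ℝ) (t : ℕ → ℕ → ℝ) (s j : ℕ)
    (hq : ∀ k ∈ Finset.Icc 1 n, 0 < q k) (hj : 1 ≤ j)
    (ht : ∀ k, j ≤ k → k ≤ n → t s k ≤ 1) :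
    gam n q t s j ≤ ∑ k ∈ Finset.Icc j n, q k := by
  apply Finset.sum_le_sum
  intro k hk
  obtain ⟨h1, h2⟩ := Finset.mem_Icc.mp hk
  have hqk := hq k (Finset.mem_Icc.mpr ⟨by omega, h2⟩)
  nlinarith [ht k h1 h2]

lemma qtail_le (n : ℕ) (q : ℕ → ℝ) (hq : ∀ k ∈ Finset.Icc 1 n, 0 < q k)
    (hqsum : ∑ k ∈ Finset.Icc 1 n, q k < 1) (j : ℕ) (hj : 1 ≤ j) :
    ∑ k ∈ Finset.Icc j n, q k < 1 := by
  apply lt_of_le_of_lt _ hqsum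
  apply Finset.sum_le_sum_of_subset_of_nonneg
  · intro k hk
    obtain ⟨h1, h2⟩ := Finset.mem_Icc.mp hk
    exact Finset.mem_Icc.mpr ⟨by omega, h2⟩
  · intro k hk _
    exact le_of_lt (hq k hk)

end gamFacts

section Main

variable (l m d n : ℕ) (M q : ℕ → ℝ)

/-- Partial solution predicate: columns `j..n` are solved. -/
def Partial (l m d n : ℕ) (M q : ℕ → ℝ) (j : ℕ) (t : ℕ → ℕ → ℝ) : Prop :=
  (∀ s k, 0 ≤ t s k) ∧ (∀ s k, s ∉ Finset.Icc 1 d → t s k = 0) ∧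
  (∀ s k, k < j → t s k = 0) ∧
  (∀ k, j ≤ k → k ≤ n → ColCond l m d M (fun s => gam n q t s (k+1)) (q k) (fun s => t s k))

lemma partial_b_bounds (hm : 1 ≤ m) (hml : m ≤ l - 1)
    (hq : ∀ k ∈ Finset.Icc 1 n, 0 < q k) (hqsum : ∑ k ∈ Finset.Icc 1 n, q k < 1)
    {t : ℕ → ℕ → ℝ} {j : ℕ} (hj1 : 1 ≤ j) (hjn : j ≤ n)
    (ht0 : ∀ s ∈ Finset.Icc 1 d, ∀ k, j + 1 ≤ k → k ≤ n → 0 ≤ t s k)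
    (hcc : ∀ k, j + 1 ≤ k → k ≤ n → ColCond l m d M (fun s => gam n q t s (k+1)) (q k)
      (fun s => t s k)) :
    ∀ s ∈ Finset.Icc 1 d, 0 ≤ gam n q t s (j+1) ∧ gam n q t s (j+1) + q j < 1 := by
  intro s hs
  have hg0 : 0 ≤ gam n q t s (j+1) :=
    gam_nonneg n q t s (j+1) hq (by omega) (fun k hk1 hk2 => ht0 s hs k hk1 hk2)
  refine ⟨hg0, ?_⟩
  have hle : gam n q t s (j+1) ≤ ∑ k ∈ Finset.Icc (j+1) n, q k := by
    apply gam_le n q t s (j+1) hq (by omega)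
    intro k hk1 hk2
    obtain ⟨hc0, hcsum, _⟩ := hcc k hk1 hk2
    exact single_le_one hc0 hcsum hs
  have hdec : ∑ k ∈ Finset.Icc j n, q k = q j + ∑ k ∈ Finset.Icc (j+1) n, q k := by
    rw [← Finset.add_sum_erase _ _ (Finset.mem_Icc.mpr ⟨le_refl j, hjn⟩),
      Finset.Icc_erase_left, ← Finset.Icc_add_one_left_eq_Ioc]
  have htail := qtail_le n q hq hqsum j hj1
  linarith

lemma exists_partial (hm : 1 ≤ m) (hml : m ≤ l - 1) (hd : 1 ≤ d)
    (hM : ∀ s ∈ Finset.Icc 1 d, ∀ r ∈ Finset.Icc 1 d, s ≤ r → M r ≤ M s)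
    (hMpos : ∀ s ∈ Finset.Icc 1 d, 0 < M s)
    (hq : ∀ k ∈ Finset.Icc 1 n, 0 < q k) (hqsum : ∑ k ∈ Finset.Icc 1 n, q k < 1) :
    ∀ i, i ≤ n → ∃ t, Partial l m d n M q (n + 1 - i) t := by
  intro i
  induction i with
  | zero =>
    intro _
    refine ⟨fun _ _ => 0, fun _ _ => le_refl 0, fun _ _ _ => rfl, fun _ _ _ => rfl, ?_⟩
    intro k hk1 hk2
    omega
  | succ i ih =>
    intro hin
    obtain ⟨t, ht0, htrow, htcol, htcc⟩ := ih (by omega)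
    set j := n - i with hjdef
    have hj1 : 1 ≤ j := by omega
    have hjn : j ≤ n := by omega
    have hjj : n + 1 - i = j + 1 := by omega
    have hjj' : n + 1 - (i+1) = j := by omega
    rw [hjj] at htcol htcc
    -- the base vector
    set b : ℕ → ℝ := fun s => gam n q t s (j+1) with hbdef
    have hbb := partial_b_bounds l m d n M q hm hml hq hqsum hj1 hjn
      (fun s _ k _ _ => ht0 s k) htcc
    have hqj : 0 < q j := hq j (Finset.mem_Icc.mpr ⟨hj1, hjn⟩)
    have hmono : ∀ s ∈ Finset.Icc 1 d, ∀ r ∈ Finset.Icc 1 d, s ≤ r →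
        M r * W l m (b r) ≤ M s * W l m (b s) := by
      rcases le_or_gt (j+1) n with hcase | hcase
      · intro s hs r hr hsr
        have hcm := colMono l m d M (fun s => gam n q t s (j+2)) (q (j+1))
          (fun s => t s (j+1)) (htcc (j+1) (le_refl _) hcase) s hs r hr hsr
        have harg : ∀ u, gam n q t u (j+2) + t u (j+1) * q (j+1) = b u := by
          intro u
          show gam n q t u (j + 2) + t u (j + 1) * q (j + 1) = gam n q t u (j+1)
          rw [gam_decomp n q t u (j+1) hcase]
          ring
        rw [harg s, harg r] at hcm
        exact hcm
      · intro s hs r hr hsr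
        have hbz : ∀ u, b u = 0 := by
          intro u
          show gam n q t u (j+1) = 0
          unfold gam
          rw [Finset.Icc_eq_empty (by omega), Finset.sum_empty]
        rw [hbz s, hbz r, W_zero l m hm]
        have := hM s hs r hr hsr
        have := hMpos s hs
        nlinarith
    obtain ⟨c, hc0, hcrow, hccol⟩ := colExists l m d hm hml hd M b (q j) hqj hMpos
      (fun s hs => (hbb s hs).1) (fun s hs => (hbb s hs).2) hmono
    rw [hjj']
    refine ⟨fun s k => if k = j then c s else t s k, ?_, ?_, ?_, ?_⟩
    · intro s k
      by_cases h : k = j <;> simp [h, hc0 s, ht0 s k]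
    · intro s k hs
      by_cases h : k = j <;> simp [h, hcrow s hs, htrow s k hs]
    · intro s k hk
      have : k ≠ j := by omega
      simp only [this, if_false]
      exact htcol s k (by omega)
    · intro k hk1 hk2
      have hgam : ∀ s, gam n q (fun s k => if k = j then c s else t s k) s (k+1)
          = gam n q t s (k+1) := by
        intro s
        apply gam_congr
        intro k' hk'1 _
        have : k' ≠ j := by omega
        simp [this]
      by_cases hkj : k = j
      · subst hkj
        have e1 : (fun s => gam n q (fun s k' => if k' = j then c s else t s k') s (j+1)) = b := by
          funext s
          show gam n q (fun s k' => if k' = j then c s else t s k') s (j+1) = gam n q t s (j+1)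
          exact hgam s
        have e2 : (fun s => if (j:ℕ) = j then c s else t s j) = c := by
          funext s; simp
        rw [e1, e2]
        exact hccol
      · have e1 : (fun s => gam n q (fun s k' => if k' = j then c s else t s k') s (k+1))
            = (fun s => gam n q t s (k+1)) := by
          funext s; rw [hgam s]
        have e2 : (fun s => if k = j then c s else t s k) = (fun s => t s k) := by
          funext s; simp [hkj]
        rw [e1, e2]
        exact htcc k (by omega) hk2

end Main


section Bridge

variable {l m d n : ℕ} {M q : ℕ → ℝ}

lemma colCond_congr {b b' : ℕ → ℝ} {qq : ℝ} {t : ℕ → ℝ}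
    (hbb : ∀ s ∈ Finset.Icc 1 d, b s = b' s) (h : ColCond l m d M b qq t) :
    ColCond l m d M b' qq t := by
  obtain ⟨ht0, hsum, dj, hdj, hpos, hzero, heq, hch⟩ := h
  obtain ⟨hdj1, hdjd⟩ := Finset.mem_Icc.mp hdj
  refine ⟨ht0, hsum, dj, hdj, hpos, hzero, ?_, ?_⟩
  · intro s hs
    obtain ⟨hs1, hs2⟩ := Finset.mem_Icc.mp hs
    rw [← hbb s (Finset.mem_Icc.mpr ⟨hs1, by omega⟩), ← hbb 1 (Finset.mem_Icc.mpr ⟨le_refl 1, by omega⟩)]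
    exact heq s hs
  · intro s hs1 hs2
    rw [← hbb s (Finset.mem_Icc.mpr ⟨by omega, by omega⟩),
      ← hbb (s+1) (Finset.mem_Icc.mpr ⟨by omega, by omega⟩)]
    exact hch s hs1 hs2

lemma sol_colCond {t : ℕ → ℕ → ℝ} (hsol : IsSolution l m d n M q t)
    {j : ℕ} (hj : j ∈ Finset.Icc 1 n) :
    ColCond l m d M (fun s => gam n q t s (j+1)) (q j) (fun s => t s j) := by
  obtain ⟨ht0, hcol⟩ := hsol
  obtain ⟨hsum, dj, hdj, hpos, hzero, heq, hch⟩ := hcol j hj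
  have harg : ∀ s, gam n q t s (j+1) + t s j * q j = gam n q t s j := by
    intro s
    rw [gam_decomp n q t s j (Finset.mem_Icc.mp hj).2]
    ring
  refine ⟨fun s hs => ht0 s hs j hj, hsum, dj, hdj, hpos, hzero, ?_, ?_⟩
  · intro s hs
    have h0 := heq s hs
    rw [← harg s, ← harg 1] at h0
    exact h0
  · intro s hs1 hs2
    have h0 := hch s hs1 hs2
    rw [← harg (s+1), ← harg s] at h0
    exact h0

lemma colCond_sol {t : ℕ → ℕ → ℝ} {j : ℕ} (hj : j ∈ Finset.Icc 1 n)
    (h : ColCond l m d M (fun s => gam n q t s (j+1)) (q j) (fun s => t s j)) :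
    (∑ s ∈ Finset.Icc 1 d, t s j) = 1 ∧
    ∃ dj ∈ Finset.Icc 1 d,
      (∀ s ∈ Finset.Icc 1 d, s ≤ dj → 0 < t s j) ∧
      (∀ s ∈ Finset.Icc 1 d, dj < s → t s j = 0) ∧
      (∀ s ∈ Finset.Icc 1 dj,
        M s * W l m (gam n q t s j) = M 1 * W l m (gam n q t 1 j)) ∧
      (∀ s, dj ≤ s → s < d →
        M (s + 1) * W l m (gam n q t (s + 1) j) ≤ M s * W l m (gam n q t s j)) := by
  obtain ⟨ht0, hsum, dj, hdj, hpos, hzero, heq, hch⟩ := h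
  have harg : ∀ s, gam n q t s (j+1) + t s j * q j = gam n q t s j := by
    intro s
    rw [gam_decomp n q t s j (Finset.mem_Icc.mp hj).2]
    ring
  refine ⟨hsum, dj, hdj, hpos, hzero, ?_, ?_⟩
  · intro s hs
    have h0 := heq s hs
    rw [← harg s, ← harg 1]
    exact h0
  · intro s hs1 hs2
    have h0 := hch s hs1 hs2
    rw [← harg (s+1), ← harg s]
    exact h0

end Bridge

theorem stmt1 (l m d n : ℕ) (hm : 1 ≤ m) (hml : m ≤ l - 1) (hd : 2 ≤ d) (hn : 1 ≤ n)
    (M q : ℕ → ℝ)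
    (hM : ∀ s ∈ Finset.Icc 1 d, ∀ r ∈ Finset.Icc 1 d, s ≤ r → M r ≤ M s)
    (hMpos : ∀ s ∈ Finset.Icc 1 d, 0 < M s)
    (hq : ∀ j ∈ Finset.Icc 1 n, 0 < q j)
    (hqsum : ∑ j ∈ Finset.Icc 1 n, q j < 1) :
    (∃ t : ℕ → ℕ → ℝ, IsSolution l m d n M q t) ∧
    (∀ t t' : ℕ → ℕ → ℝ, IsSolution l m d n M q t → IsSolution l m d n M q t' →
      ∀ s ∈ Finset.Icc 1 d, ∀ j ∈ Finset.Icc 1 n, t s j = t' s j) := by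
  have hd1 : 1 ≤ d := by omega
  constructor
  · -- existence
    obtain ⟨t, ht0, htrow, htcol, htcc⟩ :=
      exists_partial l m d n M q hm hml hd1 hM hMpos hq hqsum n (le_refl n)
    have h1 : n + 1 - n = 1 := by omega
    rw [h1] at htcol htcc
    refine ⟨t, fun s _ j _ => ht0 s j, ?_⟩
    intro j hj
    obtain ⟨hj1, hjn⟩ := Finset.mem_Icc.mp hj
    exact colCond_sol hj (htcc j hj1 hjn)
  · -- uniqueness
    intro t t' hsol hsol'
    suffices H : ∀ i, ∀ k ∈ Finset.Icc 1 n, n < k + i → ∀ s ∈ Finset.Icc 1 d, t s k = t' s k by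
      intro s hs j hj
      exact H n j hj (by have := (Finset.mem_Icc.mp hj).1; omega) s hs
    intro i
    induction i with
    | zero =>
      intro k hk hki
      have := (Finset.mem_Icc.mp hk).2
      omega
    | succ i ih =>
      intro k hk hki s hs
      obtain ⟨hk1, hk2⟩ := Finset.mem_Icc.mp hk
      rcases lt_or_ge n (k + i) with hcase | hcase
      · exact ih k hk hcase s hs
      -- k + i = n; the later columns agree
      have hlater : ∀ u ∈ Finset.Icc 1 d, ∀ k', k + 1 ≤ k' → k' ≤ n → t u k' = t' u k' := by
        intro u hu k' h1 h2
        exact ih k' (Finset.mem_Icc.mpr ⟨by omega, h2⟩) (by omega) u hu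
      set b : ℕ → ℝ := fun u => gam n q t u (k+1) with hbdef
      have hbeq : ∀ u ∈ Finset.Icc 1 d, gam n q t' u (k+1) = b u := by
        intro u hu
        exact gam_congr n q t' t u (k+1) (fun k' h1 h2 => (hlater u hu k' h1 h2).symm)
      have hcc : ColCond l m d M b (q k) (fun u => t u k) := sol_colCond hsol hk
      have hcc' : ColCond l m d M b (q k) (fun u => t' u k) :=
        colCond_congr hbeq (sol_colCond hsol' hk)
      -- bounds for b
      have hbb := partial_b_bounds l m d n M q hm hml hq hqsum hk1 hk2
        (t := t) (fun u hu k' hk'1 hk'2 => hsol.1 u hu k' (Finset.mem_Icc.mpr ⟨by omega, hk'2⟩))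
        (fun k' h1 h2 => sol_colCond hsol (Finset.mem_Icc.mpr ⟨by omega, h2⟩))
      have hqk : 0 < q k := hq k hk
      exact colUnique l m d hm hml M b hMpos (q k) hqk
        (fun u hu => (hbb u hu).1) (fun u hu => (hbb u hu).2)
        (fun u => t u k) (fun u => t' u k) hcc hcc' s hs
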